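/- Let f : ℝⁿ → ℝ be convex with L-Lipschitz gradient, achieving its minimum with S = Argmin f nonempty. If the gradient descent iterates x_{k+1} = x_k − h·∇f(x_k) with step size 0 < h ≤ (1−√τ)/L satisfy d(x_{k+1},S)² ≤ τ·d(x_k,S)² for all k, then for every k and every v ∈ proj_S(x_k): ⟨∇f(x_k), x_k − v⟩ ≥ ((1−τ)/(2h))·d(x_k,S)² + (h/2)·‖∇f(x_k)‖². -/

import Mathlib

open scoped RealInnerProductSpace

section Aux

variable {n : ℕ}

/-- Derivative of the 1-D restriction `t ↦ f (t • u + a)`. -/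
lemma line_hasDerivAt (f : EuclideanSpace ℝ (Fin n) → ℝ)
    (f' : EuclideanSpace ℝ (Fin n) → EuclideanSpace ℝ (Fin n))
    (hf : ∀ x, HasGradientAt f (f' x) x) (a u : EuclideanSpace ℝ (Fin n)) (t : ℝ) :
    HasDerivAt (fun s : ℝ => f (s • u + a)) ⟪f' (t • u + a), u⟫ t := by
  have h1 : HasDerivAt (fun s : ℝ => s • u + a) u t := by
    simpa using ((hasDerivAt_id t).smul_const u).add_const a
  have h2 := ((hf (t • u + a)).hasFDerivAt).comp_hasDerivAt t h1
  simp [InnerProductSpace.toDual_apply_apply] at h2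
  exact h2

/-- Gradient inequality for convex functions. -/
lemma grad_ineq (f : EuclideanSpace ℝ (Fin n) → ℝ)
    (f' : EuclideanSpace ℝ (Fin n) → EuclideanSpace ℝ (Fin n))
    (hf : ∀ x, HasGradientAt f (f' x) x) (hconv : ConvexOn ℝ Set.univ f)
    (a b : EuclideanSpace ℝ (Fin n)) :
    f a + ⟪f' a, b - a⟫ ≤ f b := by
  set u := b - a with hu
  have hF : ConvexOn ℝ Set.univ (fun t : ℝ => f (t • u + a)) := by
    have := hconv.comp_affineMap (AffineMap.lineMap a b)
    have heq : (f ∘ (AffineMap.lineMap a b)) = fun t : ℝ => f (t • u + a) := by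
      funext t
      simp [AffineMap.lineMap_apply, hu]
    rw [heq] at this
    simpa using this
  have hd : HasDerivAt (fun t : ℝ => f (t • u + a)) ⟪f' a, u⟫ 0 := by
    simpa using line_hasDerivAt f f' hf a u 0
  have hslope := hF.le_slope_of_hasDerivAt (Set.mem_univ 0) (Set.mem_univ 1)
    one_pos hd
  have : ⟪f' a, u⟫ ≤ f b - f a := by
    simpa [slope, hu] using hslope
  linarith

/-- Descent lemma for `L`-Lipschitz gradients. -/
lemma descent_lemma (f : EuclideanSpace ℝ (Fin n) → ℝ)
    (f' : EuclideanSpace ℝ (Fin n) → EuclideanSpace ℝ (Fin n))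
    (hf : ∀ x, HasGradientAt f (f' x) x) (L : ℝ) (hL : 0 < L)
    (hLip : ∀ x y, ‖f' x - f' y‖ ≤ L * ‖x - y‖)
    (a b : EuclideanSpace ℝ (Fin n)) :
    f b ≤ f a + ⟪f' a, b - a⟫ + L / 2 * ‖b - a‖ ^ 2 := by
  set u := b - a with hu
  set φ : ℝ → ℝ := fun t => f (t • u + a) - t * ⟪f' a, u⟫ - L / 2 * t ^ 2 * ‖u‖ ^ 2 with hφ
  have hderiv : ∀ t : ℝ, HasDerivAt φ
      (⟪f' (t • u + a), u⟫ - ⟪f' a, u⟫ - L * t * ‖u‖ ^ 2) t := by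
    intro t
    have h1 := line_hasDerivAt f f' hf a u t
    have h2 : HasDerivAt (fun t : ℝ => t * ⟪f' a, u⟫) ⟪f' a, u⟫ t := by
      simpa using (hasDerivAt_id t).mul_const ⟪f' a, u⟫
    have h3 : HasDerivAt (fun t : ℝ => L / 2 * t ^ 2 * ‖u‖ ^ 2) (L * t * ‖u‖ ^ 2) t := by
      have : HasDerivAt (fun t : ℝ => t ^ 2) (2 * t) t := by
        simpa using hasDerivAt_pow 2 t
      have := ((this.const_mul (L / 2)).mul_const (‖u‖ ^ 2))
      refine this.congr_deriv ?_
      ring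
    exact (h1.sub h2).sub h3
  have hmono : AntitoneOn φ (Set.Icc (0 : ℝ) 1) := by
    apply antitoneOn_of_deriv_nonpos (convex_Icc 0 1)
    · exact fun t _ => (hderiv t).continuousAt.continuousWithinAt
    · exact fun t _ => ((hderiv t).differentiableAt).differentiableWithinAt
    · intro t ht
      rw [interior_Icc] at ht
      rw [(hderiv t).deriv]
      have hb1 : ⟪f' (t • u + a) - f' a, u⟫ ≤ ‖f' (t • u + a) - f' a‖ * ‖u‖ :=
        real_inner_le_norm _ _
      have hb2 : ‖f' (t • u + a) - f' a‖ ≤ L * (t * ‖u‖) := by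
        have := hLip (t • u + a) a
        simpa [norm_smul, abs_of_pos ht.1, mul_assoc] using this
      have hb3 : ‖f' (t • u + a) - f' a‖ * ‖u‖ ≤ L * (t * ‖u‖) * ‖u‖ :=
        mul_le_mul_of_nonneg_right hb2 (norm_nonneg _)
      have hinner : ⟪f' (t • u + a) - f' a, u⟫ = ⟪f' (t • u + a), u⟫ - ⟪f' a, u⟫ := by
        rw [inner_sub_left]
      nlinarith [hb1, hb3, hinner]
  have h01 : φ 1 ≤ φ 0 := hmono (Set.mem_Icc.2 ⟨le_refl 0, zero_le_one⟩)
    (Set.mem_Icc.2 ⟨zero_le_one, le_refl 1⟩) zero_le_one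
  have hφ0 : φ 0 = f a := by simp [hφ]
  have hφ1 : φ 1 = f b - ⟪f' a, u⟫ - L / 2 * ‖u‖ ^ 2 := by
    simp [hφ, hu]
  rw [hφ0, hφ1] at h01
  linarith

end Aux

set_option maxHeartbeats 1000000 in
/-- Necessity of the correlated error bound for linear convergence of
gradient descent on `F^{1,1}_L` convex functions with step size `0 < h ≤ (1−√τ)/L`. -/
theorem stmt1 {n : ℕ} (f : EuclideanSpace ℝ (Fin n) → ℝ)
    (f' : EuclideanSpace ℝ (Fin n) → EuclideanSpace ℝ (Fin n))
    (hf : ∀ x, HasGradientAt f (f' x) x)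
    (hconv : ConvexOn ℝ Set.univ f)
    (L : ℝ) (hL : 0 < L)
    (hLip : ∀ x y, ‖f' x - f' y‖ ≤ L * ‖x - y‖)
    (S : Set (EuclideanSpace ℝ (Fin n)))
    (hS : S = {x | ∀ y, f x ≤ f y}) (hSne : S.Nonempty)
    (h τ : ℝ) (hτ : τ ∈ Set.Ioo (0:ℝ) 1)
    (hh : 0 < h) (hhle : h ≤ (1 - Real.sqrt τ) / L)
    (x : ℕ → EuclideanSpace ℝ (Fin n))
    (hiter : ∀ k, x (k+1) = x k - h • f' (x k))
    (hlin : ∀ k, (Metric.infDist (x (k+1)) S)^2 ≤ τ * (Metric.infDist (x k) S)^2) :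
    ∀ k, ∀ v ∈ S, dist (x k) v = Metric.infDist (x k) S →
      ((1-τ)/(2*h)) * (Metric.infDist (x k) S)^2 + (h/2) * ‖f' (x k)‖^2
        ≤ ⟪f' (x k), x k - v⟫ := by
  intro k v hv hdist
  set a := x k with ha
  set g := f' a with hg
  set G := ‖g‖ with hG
  set d := Metric.infDist a S with hd
  set s := Real.sqrt τ with hs
  have hτ0 : (0:ℝ) < τ := hτ.1
  have hτ1 : τ < 1 := hτ.2
  have hs0 : 0 ≤ s := Real.sqrt_nonneg τ
  have hs1 : s < 1 := by
    rw [hs, show (1:ℝ) = Real.sqrt 1 by simp]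
    exact Real.sqrt_lt_sqrt hτ0.le hτ1
  have hs2 : s ^ 2 = τ := Real.sq_sqrt hτ0.le
  have hvmin : ∀ y, f v ≤ f y := by rw [hS] at hv; exact hv
  -- gradient vanishes at v
  have hfv0 : f' v = 0 := by
    have hloc : IsLocalMin f v := Filter.Eventually.of_forall fun y => hvmin y
    have := hloc.hasFDerivAt_eq_zero (hf v).hasFDerivAt
    have h0 : (InnerProductSpace.toDual ℝ (EuclideanSpace ℝ (Fin n))) (f' v)
        = (InnerProductSpace.toDual ℝ (EuclideanSpace ℝ (Fin n))) 0 := by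
      simpa using this
    exact (InnerProductSpace.toDual ℝ _).injective h0
  have hGd : 0 ≤ d := Metric.infDist_nonneg
  have hGnn : 0 ≤ G := norm_nonneg _
  -- step (i): f a - f v ≥ G^2/(2L)
  have hstep1 : G ^ 2 / (2 * L) ≤ f a - f v := by
    have hdesc := descent_lemma f f' hf L hL hLip a (a - (1/L) • g)
    have hfv : f v ≤ f (a - (1/L) • g) := hvmin _
    have hsub : (a - (1/L) • g) - a = -((1/L) • g) := by abel
    rw [hsub] at hdesc
    have hin : ⟪g, -((1/L) • g)⟫ = -(1/L) * G ^ 2 := by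
      rw [inner_neg_right, real_inner_smul_right, real_inner_self_eq_norm_sq]
      ring
    have hnrm : ‖-((1/L) • g)‖ ^ 2 = (1/L) ^ 2 * G ^ 2 := by
      rw [norm_neg, norm_smul, Real.norm_eq_abs,
        abs_of_pos (show (0:ℝ) < 1/L by positivity), ← hG]
      ring
    rw [hin, hnrm] at hdesc
    have hLne : L ≠ 0 := ne_of_gt hL
    have : f (a - (1/L) • g) ≤ f a - G ^ 2 / (2 * L) := by
      have heq : f a + (-(1/L) * G ^ 2) + L / 2 * ((1/L)^2 * G^2)
          = f a - G ^ 2 / (2*L) := by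
        field_simp
        try ring
      linarith [hdesc, heq.symm.le]
    linarith
  -- step (ii)+(iii): co-coercivity ⟪g, a - v⟫ ≥ G²/L
  have hcoco : G ^ 2 / L ≤ ⟪g, a - v⟫ := by
    -- descent at v with z = v + (1/L) • g, using f' v = 0
    have hdesc := descent_lemma f f' hf L hL hLip v (v + (1/L) • g)
    have hsub : (v + (1/L) • g) - v = (1/L) • g := by abel
    rw [hsub, hfv0] at hdesc
    have hin0 : ⟪(0 : EuclideanSpace ℝ (Fin n)), (1/L) • g⟫ = 0 := inner_zero_left _
    have hnrm : ‖(1/L) • g‖ ^ 2 = (1/L) ^ 2 * G ^ 2 := by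
      rw [norm_smul, Real.norm_eq_abs,
        abs_of_pos (show (0:ℝ) < 1/L by positivity), ← hG]
      ring
    rw [hin0, hnrm] at hdesc
    -- convexity at a vs z
    have hcvx := grad_ineq f f' hf hconv a (v + (1/L) • g)
    have hin2 : ⟪g, (v + (1/L) • g) - a⟫ = ⟪g, v - a⟫ + (1/L) * G ^ 2 := by
      have : (v + (1/L) • g) - a = (v - a) + (1/L) • g := by abel
      rw [this, inner_add_right, real_inner_smul_right, real_inner_self_eq_norm_sq]
      try ring
    rw [hin2] at hcvx
    have hin3 : ⟪g, a - v⟫ = -⟪g, v - a⟫ := by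
      rw [← inner_neg_right]; congr 1; abel
    have hLne : L ≠ 0 := ne_of_gt hL
    have hq : L / 2 * ((1/L)^2 * G^2) = G ^ 2 / (2*L) := by
      field_simp
      try ring
    rw [hq] at hdesc
    have h2L : G ^ 2 / L = G ^ 2 / (2*L) + G ^ 2 / (2*L) := by field_simp; ring
    rw [hin3]
    -- hcvx : f a + (⟪g, v-a⟫ + (1/L) G²) ≤ f (v + (1/L)•g)
    -- hdesc : f (v + (1/L)•g) ≤ f v + 0 + G²/(2L)
    have h1L : (1/L) * G ^ 2 = G ^ 2 / L := by field_simp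
    linarith [hstep1, hcvx, hdesc]
  -- step (a): h * G ≥ (1 - s) * d
  have hstepa : (1 - s) * d ≤ h * G := by
    have hlin' := hlin k
    have hd1 : Metric.infDist (x (k+1)) S ≤ s * d := by
      have h1 : Metric.infDist (x (k+1)) S
          = Real.sqrt ((Metric.infDist (x (k+1)) S) ^ 2) :=
        (Real.sqrt_sq Metric.infDist_nonneg).symm
      rw [h1]
      have h2 : Real.sqrt ((Metric.infDist (x (k+1)) S) ^ 2) ≤ Real.sqrt (τ * d ^ 2) :=
        Real.sqrt_le_sqrt hlin'
      refine h2.trans_eq ?_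
      rw [Real.sqrt_mul hτ0.le, Real.sqrt_sq hGd, hs]
    have htri : d ≤ Metric.infDist (x (k+1)) S + dist a (x (k+1)) := by
      rw [hd]
      exact Metric.infDist_le_infDist_add_dist
    have hdist2 : dist a (x (k+1)) = h * G := by
      rw [hiter k, ← ha, dist_eq_norm]
      have : a - (a - h • g) = h • g := by abel
      rw [this, norm_smul, Real.norm_eq_abs, abs_of_pos hh, hG]
    rw [hdist2] at htri
    linarith
  -- step: h * L ≤ 1 - s
  have hhL : h * L ≤ 1 - s := by
    rw [div_eq_mul_inv] at hhle
    calc h * L ≤ ((1 - s) * L⁻¹) * L := by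
          apply mul_le_mul_of_nonneg_right _ hL.le
          rwa [hs]
      _ = 1 - s := by field_simp
  have hs1' : 0 < 1 - s := by linarith
  set I := ⟪g, a - v⟫ with hI
  have hInn : 0 ≤ I := le_trans (by positivity) hcoco
  -- step2 : h * G^2 ≤ (1 - s) * I
  have hstep2 : h * G ^ 2 ≤ (1 - s) * I := by
    have h1 : G ^ 2 ≤ L * I := by
      rw [div_le_iff₀ hL] at hcoco
      linarith [hcoco]
    calc h * G ^ 2 ≤ h * (L * I) := by
          apply mul_le_mul_of_nonneg_left h1 hh.le
      _ = (h * L) * I := by ring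
      _ ≤ (1 - s) * I := mul_le_mul_of_nonneg_right hhL hInn
  -- step3 : (1-s)^2 d^2 ≤ h^2 G^2
  have hstep3 : (1 - s) ^ 2 * d ^ 2 ≤ h ^ 2 * G ^ 2 := by
    have := mul_le_mul hstepa hstepa (by positivity) (by positivity)
    nlinarith [this]
  -- combine
  have key' : (1 - s) * ((1 - s ^ 2) * d ^ 2 + h ^ 2 * G ^ 2) ≤ (1 - s) * (2 * h * I) := by
    have e1 := mul_le_mul_of_nonneg_left hstep3 (show (0:ℝ) ≤ 1 + s by linarith)
    have e2 := mul_le_mul_of_nonneg_left hstep2 (show (0:ℝ) ≤ 2 * h by linarith)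
    nlinarith [e1, e2]
  have key : (1 - τ) * d ^ 2 + h ^ 2 * G ^ 2 ≤ 2 * h * I := by
    rw [← hs2]
    exact le_of_mul_le_mul_left key' hs1'
  have hgoal : ((1 - τ) * d ^ 2 + h ^ 2 * G ^ 2) / (2 * h) ≤ I := by
    rw [div_le_iff₀ (by positivity : (0:ℝ) < 2 * h)]
    linarith
  have heq : ((1-τ)/(2*h)) * d ^ 2 + (h/2) * G ^ 2
      = ((1 - τ) * d ^ 2 + h ^ 2 * G ^ 2) / (2 * h) := by
    field_simp
  rw [heq]
  exact hgoal
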